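/- Define the column-operation matrices T(a,b) over 𝔽₂ (identity except entry (b,a)=1) for a < b. For N = 2^m, the sequence consisting of all pairs (i, i + N/2) for 1 ≤ i ≤ N/2, then all pairs within each half at stride N/4, recursively down to stride 1, produces a product of T-matrices equal to the polar generator matrix F^{⊗m} (up to the standard index ordering). In particular, F^{⊗m} is a product of exactly (N/2)·m = (N/2)·log₂ N elementary matrices T(a,b). -/

import Mathlib

/-- The polar kernel `F = [[1,0],[1,1]]` over `𝔽₂`. -/
def polarKernel : Matrix (Fin 2) (Fin 2) (ZMod 2) := !![1, 0; 1, 1]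

/-- The `m`-fold Kronecker power `F^{⊗m}`. -/
def polarMatrix : (m : ℕ) → Matrix (Fin (2 ^ m)) (Fin (2 ^ m)) (ZMod 2)
  | 0 => 1
  | m + 1 =>
      Matrix.reindex (finProdFinEquiv.trans (finCongr (pow_succ 2 m).symm))
        (finProdFinEquiv.trans (finCongr (pow_succ 2 m).symm))
        (Matrix.kroneckerMap (· * ·) (polarMatrix m) polarKernel)

/-- The elementary column-operation matrix `T(a,b)` (identity except entry
`(b,a) = 1`), with indices given as natural numbers. -/
def elemT (N a b : ℕ) : Matrix (Fin N) (Fin N) (ZMod 2) :=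
  1 + Matrix.of (fun i j : Fin N => if (i : ℕ) = b ∧ (j : ℕ) = a then 1 else 0)

/-- The coupling sequence of the regular polar code: all pairs `(i, i + N/2)`
at stride `N/2`, then stride `N/4` within each half, recursively down to
stride `1` (0-indexed). -/
def polarCouplings (m : ℕ) : List (ℕ × ℕ) :=
  (List.range m).flatMap fun d =>
    ((List.range (2 ^ m)).filter fun i => i / 2 ^ (m - 1 - d) % 2 = 0).map
      fun i => (i, i + 2 ^ (m - 1 - d))

namespace PolarAux

/-! ### Nat bit lemmas -/

lemma tb_aux {k r : ℕ} (q : ℕ) (hr : r < 2^k) (b : ℕ) :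
    (2^k * q + r).testBit b = if b < k then r.testBit b else q.testBit (b - k) := by
  rcases lt_or_ge b k with h | h
  · rw [if_pos h, Nat.testBit_eq_decide_div_mod_eq, Nat.testBit_eq_decide_div_mod_eq]
    have hk : 2^k * q = 2^b * (2^(k-b) * q) := by
      rw [← mul_assoc, ← pow_add]; congr 2; omega
    rw [hk, Nat.mul_add_div (Nat.two_pow_pos b)]
    have he : 2^(k-b) * q = 2 * (2^(k-b-1) * q) := by
      rw [← mul_assoc, ← pow_succ']; congr 2; omega
    rw [he, Nat.mul_add_mod]
  · rw [if_neg (by omega), Nat.testBit_eq_decide_div_mod_eq, Nat.testBit_eq_decide_div_mod_eq]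
    have hb : 2^b = 2^k * 2^(b-k) := by rw [← pow_add]; congr 1; omega
    rw [hb, ← Nat.div_div_eq_div_mul, Nat.mul_add_div (Nat.two_pow_pos k),
      Nat.div_eq_of_lt hr, add_zero]

lemma land_iff (i j : ℕ) : j &&& i = j ↔ ∀ b, j.testBit b = true → i.testBit b = true := by
  constructor
  · intro h b hb
    have := congrArg (Nat.testBit · b) h
    simp only [Nat.testBit_and, hb, Bool.true_and] at this
    exact this
  · intro h
    apply Nat.eq_of_testBit_eq
    intro b
    rw [Nat.testBit_and]
    cases hj : j.testBit b
    · simp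
    · simp [h b hj]

lemma shift_iff (i j t : ℕ) : i >>> t = j >>> t ↔ ∀ b, t ≤ b → i.testBit b = j.testBit b := by
  constructor
  · intro h b hb
    have := congrArg (Nat.testBit · (b - t)) h
    simpa [Nat.testBit_shiftRight, Nat.add_sub_cancel' hb] using this
  · intro h
    apply Nat.eq_of_testBit_eq
    intro b
    rw [Nat.testBit_shiftRight, Nat.testBit_shiftRight]
    exact h _ (Nat.le_add_right _ _)

lemma shift_succ_iff (i j p : ℕ) :
    i >>> p = j >>> p ↔ (i.testBit p = j.testBit p ∧ i >>> (p+1) = j >>> (p+1)) := by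
  rw [shift_iff, shift_iff]
  constructor
  · exact fun h => ⟨h p le_rfl, fun b hb => h b (by omega)⟩
  · rintro ⟨h1, h2⟩ b hb
    rcases eq_or_lt_of_le hb with rfl | hb'
    · exact h1
    · exact h2 b (by omega)

lemma decomp {i p : ℕ} (h : i / 2^p % 2 = 1) :
    ∃ q r, r < 2^p ∧ i = 2^(p+1) * q + 2^p + r := by
  refine ⟨i / 2^(p+1), i % 2^p, Nat.mod_lt _ (Nat.two_pow_pos p), ?_⟩
  have h1 := Nat.div_add_mod i (2^(p+1))
  have h2 : i % 2^(p+1) = i % 2^p + 2^p * (i / 2^p % 2) := by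
    rw [pow_succ]; exact Nat.mod_mul
  rw [h] at h2
  omega

lemma testBit_sub_pow {i p : ℕ} (h : i / 2^p % 2 = 1) (b : ℕ) :
    (i - 2^p).testBit b = if b = p then false else i.testBit b := by
  obtain ⟨q, r, hr, hi⟩ := decomp h
  have hsub : i - 2^p = 2^(p+1) * q + r := by omega
  have h2 : 2^p + r < 2^(p+1) := by rw [pow_succ]; omega
  have hrr : r < 2^(p+1) := lt_of_lt_of_le hr (Nat.pow_le_pow_right two_pos (Nat.le_succ _))
  have hi' : i = 2^(p+1) * q + (2^p + r) := by omega
  rw [hsub, hi', tb_aux q hrr b, tb_aux q h2 b]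
  rcases lt_trichotomy b p with hb | rfl | hb
  · rw [if_pos (by omega), if_neg (by omega), if_pos (by omega)]
    rw [show 2^p + r = 2^p * 1 + r by ring, tb_aux 1 hr b, if_pos hb]
  · rw [if_pos (by omega), if_pos rfl]
    exact Nat.testBit_lt_two_pow hr
  · rw [if_neg (by omega), if_neg (by omega), if_neg (by omega)]

lemma tb_of_zero {i : ℕ} (p : ℕ) (h : i / 2^p % 2 = 0) : i.testBit p = false := by
  rw [Nat.testBit_eq_decide_div_mod_eq, h]
  decide

lemma tb_of_one {i : ℕ} (p : ℕ) (h : i / 2^p % 2 = 1) : i.testBit p = true := by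
  rw [Nat.testBit_eq_decide_div_mod_eq, h]
  decide

/-! ### The entry formula for `polarMatrix` -/

lemma land_split (i j : ℕ) :
    (j &&& i = j) ↔ ((j/2) &&& (i/2) = j/2 ∧ (j%2) &&& (i%2) = j%2) := by
  have h0 : ((j%2) &&& (i%2) = j%2) ↔ (j.testBit 0 = true → i.testBit 0 = true) := by
    rw [Nat.testBit_zero, Nat.testBit_zero]
    rcases Nat.mod_two_eq_zero_or_one j with hj | hj <;>
      rcases Nat.mod_two_eq_zero_or_one i with hi | hi <;> rw [hj, hi] <;> decide
  rw [land_iff, land_iff, h0]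
  constructor
  · intro h
    refine ⟨fun b hb => ?_, fun h' => h 0 h'⟩
    rw [← Nat.testBit_succ] at hb ⊢
    exact h (b+1) hb
  · rintro ⟨hh, hl⟩ b hb
    cases b with
    | zero => exact hl hb
    | succ b =>
      rw [Nat.testBit_succ] at hb ⊢
      exact hh b hb

lemma kernel_apply (a b : Fin 2) :
    polarKernel a b = if (b : ℕ) &&& (a : ℕ) = (b : ℕ) then 1 else 0 := by
  fin_cases a <;> fin_cases b <;> simp [polarKernel]

lemma polarMatrix_apply (m : ℕ) (i j : Fin (2^m)) :
    polarMatrix m i j = if (j : ℕ) &&& (i : ℕ) = (j : ℕ) then 1 else 0 := by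
  induction m with
  | zero =>
    have hi : (i : ℕ) = 0 := by omega
    have : i = j := by apply Fin.ext; omega
    subst this
    simp [polarMatrix, Matrix.one_apply, hi]
  | succ m ih =>
    show (Matrix.reindex _ _ _) i j = _
    rw [Matrix.reindex_apply, Matrix.submatrix_apply]
    have he : ∀ x : Fin (2^(m+1)), (finProdFinEquiv.trans (finCongr (pow_succ 2 m).symm)).symm x
        = (⟨(x:ℕ)/2, by omega⟩, ⟨(x:ℕ)%2, by omega⟩) := fun x => rfl
    rw [he i, he j]
    show polarMatrix m _ _ * polarKernel _ _ = _
    rw [ih, kernel_apply]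
    by_cases h : (j:ℕ) &&& (i:ℕ) = (j:ℕ)
    · obtain ⟨h1, h2⟩ := (land_split (i:ℕ) (j:ℕ)).mp h
      rw [if_pos h, if_pos h1, if_pos h2, one_mul]
    · rw [if_neg h]
      have := (land_split (i:ℕ) (j:ℕ)).not.mp h
      by_cases h1 : ((j:ℕ)/2) &&& ((i:ℕ)/2) = (j:ℕ)/2 <;>
        by_cases h2 : ((j:ℕ)%2) &&& ((i:ℕ)%2) = (j:ℕ)%2 <;>
        simp_all

/-! ### Elementary matrices and layer products -/

def eMat (n a b : ℕ) : Matrix (Fin n) (Fin n) (ZMod 2) :=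
  Matrix.of fun i j : Fin n => if (i : ℕ) = b ∧ (j : ℕ) = a then 1 else 0

def stepMat (m p : ℕ) : Matrix (Fin (2^m)) (Fin (2^m)) (ZMod 2) :=
  Matrix.of fun i j : Fin (2^m) =>
    if ((j : ℕ) / 2^p % 2 = 0 ∧ (i : ℕ) = (j : ℕ) + 2^p) then 1 else 0

def condMat (m t : ℕ) : Matrix (Fin (2^m)) (Fin (2^m)) (ZMod 2) :=
  Matrix.of fun i j : Fin (2^m) =>
    if ((j : ℕ) &&& (i : ℕ) = (j : ℕ) ∧ (i : ℕ) >>> t = (j : ℕ) >>> t) then 1 else 0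

lemma prod_one_add {n : ℕ} (l : List ℕ) (e : ℕ → Matrix (Fin n) (Fin n) (ZMod 2))
    (h : ∀ a ∈ l, ∀ b ∈ l, e a * e b = 0) :
    (l.map fun a => 1 + e a).prod = 1 + (l.map e).sum := by
  induction l with
  | nil => simp
  | cons a t ih =>
    simp only [List.map_cons, List.prod_cons, List.sum_cons]
    rw [ih (fun x hx y hy => h x (List.mem_cons_of_mem _ hx) y (List.mem_cons_of_mem _ hy))]
    have hS : e a * (t.map e).sum = 0 := by
      rw [← List.sum_map_mul_left]
      apply List.sum_eq_zero
      intro x hx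
      obtain ⟨b, hb, rfl⟩ := List.mem_map.mp hx
      exact h a List.mem_cons_self b (List.mem_cons_of_mem _ hb)
    rw [mul_add, mul_one, add_mul, one_mul, hS, add_zero]
    abel

lemma sum_eMat {n : ℕ} (s : ℕ) (l : List ℕ) (hl : l.Nodup) (i j : Fin n) :
    ((l.map fun a => eMat n a (a + s)).sum) i j
      = if ((j : ℕ) ∈ l ∧ (i : ℕ) = (j : ℕ) + s) then 1 else 0 := by
  induction l with
  | nil => simp
  | cons a t ih =>
    rw [List.map_cons, List.sum_cons]
    have ha : a ∉ t := (List.nodup_cons.mp hl).1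
    rw [Matrix.add_apply, ih (List.nodup_cons.mp hl).2]
    show (if (i : ℕ) = a + s ∧ (j : ℕ) = a then 1 else 0) + _ = _
    by_cases hja : (j : ℕ) = a
    · have hjt : (j : ℕ) ∉ t := by rw [hja]; exact_mod_cast ha
      by_cases his : (i : ℕ) = (j : ℕ) + s
      · rw [if_pos ⟨by omega, hja⟩, if_neg (by tauto),
          if_pos ⟨by rw [hja]; exact List.mem_cons_self, his⟩, add_zero]
      · rw [if_neg (by rintro ⟨h1, h2⟩; exact his (by omega)), if_neg (by tauto),
          if_neg (by rintro ⟨h1, h2⟩; exact his h2), add_zero]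
    · rw [if_neg (by tauto), zero_add]
      congr 1
      simp [List.mem_cons, hja]

lemma eMat_orth (m p a b : ℕ) (ha : a / 2^p % 2 = 0) (hb : b / 2^p % 2 = 0) :
    eMat (2^m) a (a + 2^p) * eMat (2^m) b (b + 2^p) = 0 := by
  have hab : a ≠ b + 2^p := by
    intro h
    have : (b + 2^p) / 2^p = b / 2^p + 1 := Nat.add_div_right _ (Nat.two_pow_pos p)
    rw [h, this] at ha
    omega
  ext i j
  rw [Matrix.mul_apply, Matrix.zero_apply]
  apply Finset.sum_eq_zero
  intro l _
  show (if (i:ℕ) = a + 2^p ∧ (l:ℕ) = a then 1 else 0) *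
    (if (l:ℕ) = b + 2^p ∧ (j:ℕ) = b then 1 else 0) = 0
  split_ifs with h1 h2 <;> first | exact absurd (h1.2.symm.trans h2.1) hab | simp

lemma layer_prod (m p : ℕ) :
    ((((List.range (2^m)).filter fun i => i / 2^p % 2 = 0).map
        fun i => elemT (2^m) i (i + 2^p)).prod)
      = 1 + stepMat m p := by
  set L := (List.range (2^m)).filter fun i => decide (i / 2^p % 2 = 0) with hL
  have hmem : ∀ a ∈ L, a / 2^p % 2 = 0 ∧ a < 2^m := by
    intro a ha
    rw [hL, List.mem_filter, List.mem_range] at ha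
    exact ⟨by simpa using ha.2, ha.1⟩
  show ((L.map fun a => 1 + eMat (2^m) a (a + 2^p)).prod) = _
  rw [prod_one_add L _ (fun a ha b hb => eMat_orth m p a b (hmem a ha).1 (hmem b hb).1)]
  congr 1
  ext i j
  rw [sum_eMat _ _ (List.nodup_range.filter _) i j]
  show _ = (if ((j:ℕ) / 2^p % 2 = 0 ∧ (i:ℕ) = (j:ℕ) + 2^p) then 1 else 0)
  congr 1
  rw [eq_iff_iff]
  constructor
  · rintro ⟨hm, his⟩
    exact ⟨(hmem _ hm).1, his⟩
  · rintro ⟨hd, his⟩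
    refine ⟨?_, his⟩
    rw [List.mem_filter, List.mem_range]
    exact ⟨j.isLt, by simpa using hd⟩

/-! ### The key multiplication step -/

lemma step (m p : ℕ) (hp : p < m) :
    (1 + stepMat m p) * condMat m p = condMat m (p + 1) := by
  rw [add_mul, one_mul]
  ext i j
  rw [Matrix.add_apply]
  rcases Nat.mod_two_eq_zero_or_one ((i : ℕ) / 2^p) with hbit | hbit
  · have hz : (stepMat m p * condMat m p) i j = 0 := by
      rw [Matrix.mul_apply]
      apply Finset.sum_eq_zero
      intro l _
      show (if ((l:ℕ) / 2^p % 2 = 0 ∧ (i:ℕ) = (l:ℕ) + 2^p) then 1 else 0) * _ = 0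
      split_ifs with h
      · exfalso
        have : ((l:ℕ) + 2^p) / 2^p = (l:ℕ) / 2^p + 1 := Nat.add_div_right _ (Nat.two_pow_pos p)
        rw [h.2, this] at hbit
        omega
      · exact zero_mul _
    rw [hz, add_zero]
    have hif : i.1.testBit p = false := tb_of_zero p hbit
    show (if _ then _ else _) = (if _ then _ else _)
    apply if_congr _ rfl rfl
    constructor
    · rintro ⟨hsub, hsh⟩
      exact ⟨hsub, ((shift_succ_iff _ _ _).mp hsh).2⟩
    · rintro ⟨hsub, hsh⟩
      refine ⟨hsub, (shift_succ_iff _ _ _).mpr ⟨?_, hsh⟩⟩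
      rw [hif]
      cases hjp : j.1.testBit p
      · rfl
      · exact absurd ((land_iff _ _).mp hsub p hjp) (by rw [hif]; simp)
  · have hle : 2^p ≤ (i : ℕ) := by
      by_contra hc
      rw [Nat.div_eq_of_lt (by omega)] at hbit
      simp at hbit
    have hiLt := i.isLt
    set l0 : Fin (2^m) := ⟨(i : ℕ) - 2^p, lt_of_le_of_lt (Nat.sub_le _ _) i.isLt⟩ with hl0def
    have hl0b : ∀ b, (l0 : ℕ).testBit b = if b = p then false else i.1.testBit b :=
      fun b => testBit_sub_pow hbit b
    have hSC : (stepMat m p * condMat m p) i j = condMat m p l0 j := by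
      rw [Matrix.mul_apply]
      rw [Finset.sum_eq_single l0]
      · show (if ((l0:ℕ) / 2^p % 2 = 0 ∧ (i:ℕ) = (l0:ℕ) + 2^p) then 1 else 0) * _ = _
        rw [if_pos, one_mul]
        constructor
        · obtain ⟨q, r, hr, hi⟩ := decomp hbit
          have : (l0 : ℕ) = 2^p * (2 * q) + r := by
            show (i:ℕ) - 2^p = _
            rw [hi]; ring_nf; omega
          rw [this, Nat.mul_add_div (Nat.two_pow_pos p), Nat.div_eq_of_lt hr, add_zero,
            Nat.mul_mod_right]
        · show (i : ℕ) = (i:ℕ) - 2^p + 2^p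
          omega
      · intro l _ hne
        show (if ((l:ℕ) / 2^p % 2 = 0 ∧ (i:ℕ) = (l:ℕ) + 2^p) then 1 else 0) * _ = 0
        split_ifs with h
        · exact absurd (Fin.ext (show (l:ℕ) = (i:ℕ) - 2^p by omega)) hne
        · exact zero_mul _
      · intro h
        exact absurd (Finset.mem_univ l0) h
    rw [hSC]
    have hib : i.1.testBit p = true := tb_of_one p hbit
    cases hjp : j.1.testBit p
    · have hCij : condMat m p i j = 0 := by
        apply if_neg
        rintro ⟨hsub, hsh⟩
        have := ((shift_succ_iff _ _ _).mp hsh).1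
        rw [hib, hjp] at this
        exact Bool.true_eq_false.mp this
      rw [hCij, zero_add]
      show (if _ then _ else _) = (if _ then _ else _)
      apply if_congr _ rfl rfl
      have hsub_iff : (j.1 &&& (l0:ℕ) = j.1) ↔ (j.1 &&& i.1 = j.1) := by
        rw [land_iff, land_iff]
        constructor
        · intro h b hb
          have hbp : b ≠ p := by intro e; subst e; simp [hb] at hjp
          have := h b hb
          rw [hl0b b, if_neg hbp] at this
          exact this
        · intro h b hb
          have hbp : b ≠ p := by intro e; subst e; simp [hb] at hjp
          rw [hl0b b, if_neg hbp]
          exact h b hb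
      have hshift_eq : (l0:ℕ) >>> (p+1) = i.1 >>> (p+1) := by
        rw [shift_iff]
        intro b hb
        rw [hl0b b, if_neg (by omega)]
      constructor
      · rintro ⟨hsub, hsh⟩
        refine ⟨hsub_iff.mp hsub, ?_⟩
        rw [← hshift_eq]
        exact ((shift_succ_iff _ _ _).mp hsh).2
      · rintro ⟨hsub, hsh⟩
        refine ⟨hsub_iff.mpr hsub, (shift_succ_iff _ _ _).mpr ⟨?_, by rw [hshift_eq]; exact hsh⟩⟩
        rw [hl0b p, if_pos rfl, hjp]
    · have hCl0 : condMat m p l0 j = 0 := by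
        apply if_neg
        rintro ⟨hsub, hsh⟩
        have := (land_iff _ _).mp hsub p hjp
        rw [hl0b p, if_pos rfl] at this
        exact Bool.noConfusion this
      rw [hCl0, add_zero]
      show (if _ then _ else _) = (if _ then _ else _)
      apply if_congr _ rfl rfl
      constructor
      · rintro ⟨hsub, hsh⟩
        exact ⟨hsub, ((shift_succ_iff _ _ _).mp hsh).2⟩
      · rintro ⟨hsub, hsh⟩
        exact ⟨hsub, (shift_succ_iff _ _ _).mpr ⟨by rw [hib, hjp], hsh⟩⟩

/-! ### Telescoping -/

lemma condMat_zero (m : ℕ) : condMat m 0 = 1 := by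
  ext i j
  rw [Matrix.one_apply]
  show (if _ then _ else _) = (if _ then _ else _)
  apply if_congr _ rfl rfl
  constructor
  · rintro ⟨hsub, hsh⟩
    exact Fin.ext (by simpa using hsh)
  · rintro rfl
    exact ⟨Nat.and_self _, rfl⟩

lemma condMat_top (m : ℕ) : condMat m m = polarMatrix m := by
  ext i j
  rw [polarMatrix_apply]
  show (if _ then _ else _) = (if _ then _ else _)
  apply if_congr _ rfl rfl
  have hi : (i:ℕ) >>> m = 0 := by
    rw [Nat.shiftRight_eq_div_pow]; exact Nat.div_eq_of_lt i.isLt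
  have hj : (j:ℕ) >>> m = 0 := by
    rw [Nat.shiftRight_eq_div_pow]; exact Nat.div_eq_of_lt j.isLt
  constructor
  · exact fun h => h.1
  · exact fun h => ⟨h, by rw [hi, hj]⟩

lemma suffix_prod (m : ℕ) : ∀ n k, k + n = m →
    ((List.range' k n).map fun d => 1 + stepMat m (m - 1 - d)).prod = condMat m n := by
  intro n
  induction n with
  | zero => intro k hk; simpa using (condMat_zero m).symm
  | succ n ih =>
    intro k hk
    rw [List.range'_succ, List.map_cons, List.prod_cons, ih (k+1) (by omega)]
    have hkd : m - 1 - k = n := by omega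
    rw [hkd]
    exact step m n (by omega)

/-! ### Counting -/

lemma block_count (p : ℕ) :
    ((List.range (2^(p+1))).filter fun i => i / 2^p % 2 = 0).length = 2^p := by
  have h2 : 2^(p+1) = 2^p + 2^p := by rw [pow_succ]; ring
  rw [h2, List.range_add, List.filter_append, List.length_append]
  have ha : (List.range (2^p)).filter (fun i => decide (i / 2^p % 2 = 0)) = List.range (2^p) := by
    rw [List.filter_eq_self]
    intro a ha
    rw [List.mem_range] at ha
    simp [Nat.div_eq_of_lt ha]
  have hb : ((List.range (2^p)).map (fun x => 2^p + x)).filter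
      (fun i => decide (i / 2^p % 2 = 0)) = [] := by
    rw [List.filter_eq_nil_iff]
    intro a ha
    rw [List.mem_map] at ha
    obtain ⟨x, hx, rfl⟩ := ha
    rw [List.mem_range] at hx
    have hd : (2^p + x) / 2^p = 1 + x / 2^p := by
      rw [show 2^p + x = 2^p * 1 + x by ring, Nat.mul_add_div (Nat.two_pow_pos p)]
    simp [hd, Nat.div_eq_of_lt hx]
  rw [ha, hb]
  simp

lemma count_lemma (p n : ℕ) :
    ((List.range (2^(p+1) * n)).filter fun i => i / 2^p % 2 = 0).length = 2^p * n := by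
  induction n with
  | zero => simp
  | succ n ih =>
    rw [show 2^(p+1) * (n+1) = 2^(p+1) * n + 2^(p+1) by ring, List.range_add,
      List.filter_append, List.length_append, ih, List.filter_map, List.length_map]
    have hc : ∀ x ∈ List.range (2^(p+1)),
        ((fun i => decide (i / 2^p % 2 = 0)) ∘ (fun x => 2^(p+1) * n + x)) x
          = decide (x / 2^p % 2 = 0) := by
      intro x _
      simp only [Function.comp]
      apply decide_eq_decide.mpr
      have hd : (2^(p+1) * n + x) / 2^p = 2 * n + x / 2^p := by
        rw [show 2^(p+1) * n = 2^p * (2 * n) by rw [pow_succ]; ring,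
          Nat.mul_add_div (Nat.two_pow_pos p)]
      rw [hd]
      omega
    rw [List.filter_congr hc, block_count p]
    ring

lemma layer_count {m p : ℕ} (hp : p < m) :
    ((List.range (2^m)).filter fun i => i / 2^p % 2 = 0).length = 2^(m-1) := by
  have h1 : 2^m = 2^(p+1) * 2^(m-p-1) := by rw [← pow_add]; congr 1; omega
  have h2 : 2^p * 2^(m-p-1) = 2^(m-1) := by rw [← pow_add]; congr 1; omega
  rw [h1, count_lemma, h2]

lemma add_pow_lt {i q m : ℕ} (hq : q < m) (hi : i < 2^m) (hbit : i / 2^q % 2 = 0) :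
    i + 2^q < 2^m := by
  have h6 : 2^(q+1) * 2^(m-q-1) = 2^m := by rw [← pow_add]; congr 1; omega
  have hQ : i / 2^(q+1) < 2^(m-q-1) := by
    apply Nat.div_lt_of_lt_mul
    rw [h6]
    exact hi
  have h2 : i % 2^(q+1) = i % 2^q + 2^q * (i / 2^q % 2) := by
    rw [pow_succ]; exact Nat.mod_mul
  rw [hbit, mul_zero, add_zero] at h2
  have h3 := Nat.div_add_mod i (2^(q+1))
  have h8 : 2^(q+1) * (i / 2^(q+1) + 1) = 2^(q+1) * (i / 2^(q+1)) + 2^(q+1) := by ring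
  have h9 : 2^(q+1) * (i / 2^(q+1) + 1) ≤ 2^m :=
    le_of_le_of_eq (Nat.mul_le_mul_left _ (by omega)) h6
  have h4 : i % 2^q < 2^q := Nat.mod_lt _ (Nat.two_pow_pos q)
  have h7 : 2^(q+1) = 2 * 2^q := by rw [pow_succ]; ring
  omega

end PolarAux

open PolarAux in
theorem polar_matrix_as_coupling_product (m : ℕ) (hm : 1 ≤ m) :
    (polarCouplings m).length = 2 ^ (m - 1) * m ∧
    (∀ p ∈ polarCouplings m, p.1 < p.2 ∧ p.2 < 2 ^ m) ∧
    ((polarCouplings m).map fun p => elemT (2 ^ m) p.1 p.2).prod = polarMatrix m := by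
  refine ⟨?_, ?_, ?_⟩
  · rw [polarCouplings, List.length_flatMap]
    have hc : ∀ d ∈ List.range m, (List.length ∘ fun d =>
        ((List.range (2 ^ m)).filter fun i => i / 2 ^ (m - 1 - d) % 2 = 0).map
          fun i => (i, i + 2 ^ (m - 1 - d))) d = 2^(m-1) := by
      intro d hd
      rw [List.mem_range] at hd
      simp only [Function.comp, List.length_map]
      exact layer_count (by omega)
    erw [List.map_congr_left hc]
    simp [List.map_const', mul_comm]
  · intro p hp
    rw [polarCouplings, List.mem_flatMap] at hp
    obtain ⟨d, hd, hp⟩ := hp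
    rw [List.mem_range] at hd
    rw [List.mem_map] at hp
    obtain ⟨i, hi, rfl⟩ := hp
    rw [List.mem_filter, List.mem_range] at hi
    have hi2 : i / 2 ^ (m - 1 - d) % 2 = 0 := by simpa using hi.2
    exact ⟨by simp [Nat.two_pow_pos], add_pow_lt (by omega) hi.1 hi2⟩
  · have h1 : ((polarCouplings m).map fun p => elemT (2^m) p.1 p.2)
        = (List.range m).flatMap fun d =>
            ((List.range (2^m)).filter fun i => i / 2^(m-1-d) % 2 = 0).map
              fun i => elemT (2^m) i (i + 2^(m-1-d)) := by
      rw [polarCouplings, List.map_flatMap]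
      simp only [List.map_map]
      rfl
    rw [h1, List.flatMap_def, List.prod_flatten, List.map_map]
    have hc : ∀ d ∈ List.range m, (List.prod ∘ fun d =>
        ((List.range (2^m)).filter fun i => i / 2^(m-1-d) % 2 = 0).map
          fun i => elemT (2^m) i (i + 2^(m-1-d))) d = 1 + stepMat m (m-1-d) := by
      intro d _
      exact layer_prod m (m-1-d)
    rw [List.map_congr_left hc, List.range_eq_range', suffix_prod m m 0 (by omega), condMat_top]
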